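/- Let n be an even positive integer and let Z_n denote the zeta matrix over ℤ of the boolean algebra of subsets of {0,…,n−1} ordered by inclusion. Then det(Z_n + Z_nᵀ) = 2^{(2ⁿ+2)/3}. -/

import Mathlib

open Matrix Finset

variable {n : ℕ}

def boolZeta (n : ℕ) : Matrix (Finset (Fin n)) (Finset (Fin n)) ℤ :=
  Matrix.of fun A B => if A ⊆ B then 1 else 0

def boolP (n : ℕ) : Matrix (Finset (Fin n)) (Finset (Fin n)) ℤ :=
  Matrix.of fun A B => (-1) ^ (n - A.card) * (if Aᶜ ⊆ B then 1 else 0)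

lemma sum_interval (S T : Finset (Fin n)) :
    (∑ C : Finset (Fin n), if S ⊆ C ∧ C ⊆ T then ((-1 : ℤ) ^ C.card) else 0)
      = if S = T then (-1 : ℤ) ^ S.card else 0 := by
  by_cases hST : S ⊆ T
  · have h1 : (∑ C : Finset (Fin n), if S ⊆ C ∧ C ⊆ T then ((-1 : ℤ) ^ C.card) else 0)
        = ∑ E ∈ (T \ S).powerset, (-1 : ℤ) ^ (S ∪ E).card := by
      rw [← Finset.sum_filter]
      refine Finset.sum_nbij' (fun C => C \ S) (fun E => S ∪ E) ?_ ?_ ?_ ?_ ?_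
      · intro C hC
        simp only [Finset.mem_filter] at hC
        exact Finset.mem_powerset.mpr (Finset.sdiff_subset_sdiff hC.2.2 le_rfl)
      · intro E hE
        simp only [Finset.mem_powerset] at hE
        simp only [Finset.mem_filter, Finset.mem_univ, true_and]
        exact ⟨Finset.subset_union_left, Finset.union_subset hST
          (hE.trans (Finset.sdiff_subset))⟩
      · intro C hC
        simp only [Finset.mem_filter] at hC
        exact Finset.union_sdiff_of_subset hC.2.1
      · intro E hE
        simp only [Finset.mem_powerset] at hE
        exact Finset.union_sdiff_cancel_left (Finset.disjoint_sdiff.mono_right hE)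
      · intro C hC
        simp only [Finset.mem_filter] at hC
        rw [Finset.union_sdiff_of_subset hC.2.1]
    rw [h1]
    have h2 : ∀ E ∈ (T \ S).powerset, ((-1 : ℤ) ^ (S ∪ E).card)
        = (-1 : ℤ) ^ S.card * (-1 : ℤ) ^ E.card := by
      intro E hE
      rw [Finset.card_union_of_disjoint (Finset.disjoint_sdiff.mono_right
        (Finset.mem_powerset.mp hE)), pow_add]
    rw [Finset.sum_congr rfl h2, ← Finset.mul_sum, Finset.sum_powerset_neg_one_pow_card]
    have h3 : (T \ S = ∅) ↔ (S = T) := by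
      rw [Finset.sdiff_eq_empty_iff_subset]
      exact ⟨fun h => le_antisymm hST h, fun h => h ▸ le_rfl⟩
    by_cases h4 : S = T
    · rw [if_pos (h3.mpr h4), if_pos h4, mul_one]
    · rw [if_neg (fun h => h4 (h3.mp h)), if_neg h4, mul_zero]
  · rw [Finset.sum_eq_zero, if_neg]
    · rintro rfl; exact hST le_rfl
    · intro C _
      rw [if_neg]
      rintro ⟨h1, h2⟩
      exact hST (h1.trans h2)

lemma compl_subset_compl_iff' (A D : Finset (Fin n)) : Aᶜ ⊆ Dᶜ ↔ D ⊆ A := by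
  constructor
  · intro h x hx
    by_contra hxA
    exact (Finset.mem_compl.mp (h (Finset.mem_compl.mpr hxA))) hx
  · intro h x hx
    rw [Finset.mem_compl] at hx ⊢
    exact fun hxD => hx (h hxD)

def boolP2 (n : ℕ) : Matrix (Finset (Fin n)) (Finset (Fin n)) ℤ :=
  Matrix.of fun A B => (-1) ^ (n - A.card) * (if A ∩ B = ∅ then 1 else 0)

lemma card_compl_compl (D : Finset (Fin n)) : n - (Dᶜ).card = D.card := by
  rw [Finset.card_compl, Fintype.card_fin]
  have : D.card ≤ n := by
    simpa using Finset.card_le_univ D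
  omega

lemma compl_sum (F : Finset (Fin n) → ℤ) : ∑ C : Finset (Fin n), F C
    = ∑ D : Finset (Fin n), F Dᶜ :=
  (Fintype.sum_equiv (Function.Involutive.toPerm _ (fun A : Finset (Fin n) => compl_compl A))
    (fun D => F Dᶜ) F (fun _ => rfl)).symm

lemma inter_empty_iff (A B : Finset (Fin n)) : Aᶜ ∩ B = ∅ ↔ B ⊆ A := by
  simp only [Finset.eq_empty_iff_forall_notMem, Finset.mem_inter, Finset.mem_compl,
    Finset.subset_iff, not_and]
  constructor
  · intro h x hx
    by_contra hxA
    exact h x hxA hx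
  · intro h x hxA hxB
    exact hxA (h hxB)

lemma hZP : boolZeta n * boolP n = (boolZeta n)ᵀ := by
  ext A B
  simp only [mul_apply, boolZeta, boolP, Matrix.of_apply, transpose_apply]
  have step1 : ∀ C ∈ Finset.univ, (if A ⊆ C then (1 : ℤ) else 0) *
      ((-1) ^ (n - C.card) * (if Cᶜ ⊆ B then 1 else 0))
      = if A ⊆ C ∧ Cᶜ ⊆ B then (-1 : ℤ) ^ (n - C.card) else 0 := by
    intro C _
    by_cases h1 : A ⊆ C <;> by_cases h2 : Cᶜ ⊆ B <;> simp [h1, h2]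
  rw [Finset.sum_congr rfl step1, compl_sum]
  have step2 : ∀ D ∈ Finset.univ, (if A ⊆ Dᶜ ∧ Dᶜᶜ ⊆ B then (-1 : ℤ) ^ (n - (Dᶜ).card) else 0)
      = if ∅ ⊆ D ∧ D ⊆ Aᶜ ∩ B then (-1 : ℤ) ^ D.card else 0 := by
    intro D _
    rw [card_compl_compl]
    apply if_congr _ rfl rfl
    rw [compl_compl, Finset.subset_inter_iff, Finset.subset_compl_comm]
    simp [and_comm]
  rw [Finset.sum_congr rfl step2, sum_interval]
  by_cases h : B ⊆ A
  · rw [if_pos ((inter_empty_iff A B).mpr h).symm, if_pos h]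
    simp
  · rw [if_neg (fun hh => h ((inter_empty_iff A B).mp hh.symm)), if_neg h]

lemma hPP : boolP n * boolP n = boolP2 n := by
  ext A B
  simp only [mul_apply, boolP, boolP2, Matrix.of_apply]
  have step1 : ∀ C ∈ Finset.univ, ((-1 : ℤ) ^ (n - A.card) * (if Aᶜ ⊆ C then 1 else 0)) *
      ((-1) ^ (n - C.card) * (if Cᶜ ⊆ B then 1 else 0))
      = (-1 : ℤ) ^ (n - A.card) *
        (if Aᶜ ⊆ C ∧ Cᶜ ⊆ B then (-1 : ℤ) ^ (n - C.card) else 0) := by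
    intro C _
    by_cases h1 : Aᶜ ⊆ C <;> by_cases h2 : Cᶜ ⊆ B <;> simp [h1, h2]
  rw [Finset.sum_congr rfl step1, ← Finset.mul_sum, compl_sum]
  have step2 : ∀ D ∈ Finset.univ, (if Aᶜ ⊆ Dᶜ ∧ Dᶜᶜ ⊆ B then (-1 : ℤ) ^ (n - (Dᶜ).card) else 0)
      = if ∅ ⊆ D ∧ D ⊆ A ∩ B then (-1 : ℤ) ^ D.card else 0 := by
    intro D _
    rw [card_compl_compl]
    apply if_congr _ rfl rfl
    simp only [compl_compl, Finset.subset_inter_iff, Finset.empty_subset, true_and]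
    rw [compl_subset_compl_iff']
  rw [Finset.sum_congr rfl step2, sum_interval]
  by_cases h : A ∩ B = ∅
  · rw [if_pos h.symm, if_pos h]
    simp
  · rw [if_neg (fun hh => h hh.symm), if_neg h]

lemma hP2P (he : Even n) : boolP2 n * boolP n = 1 := by
  ext A B
  simp only [mul_apply, boolP, boolP2, Matrix.of_apply]
  have step1 : ∀ C ∈ Finset.univ, ((-1 : ℤ) ^ (n - A.card) * (if A ∩ C = ∅ then 1 else 0)) *
      ((-1) ^ (n - C.card) * (if Cᶜ ⊆ B then 1 else 0))
      = (-1 : ℤ) ^ (n - A.card) *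
        (if A ∩ C = ∅ ∧ Cᶜ ⊆ B then (-1 : ℤ) ^ (n - C.card) else 0) := by
    intro C _
    by_cases h1 : A ∩ C = ∅ <;> by_cases h2 : Cᶜ ⊆ B <;> simp [h1, h2]
  rw [Finset.sum_congr rfl step1, ← Finset.mul_sum, compl_sum]
  have step2 : ∀ D ∈ Finset.univ, (if A ∩ Dᶜ = ∅ ∧ Dᶜᶜ ⊆ B then (-1 : ℤ) ^ (n - (Dᶜ).card) else 0)
      = if A ⊆ D ∧ D ⊆ B then (-1 : ℤ) ^ D.card else 0 := by
    intro D _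
    rw [card_compl_compl]
    apply if_congr _ rfl rfl
    rw [compl_compl, Finset.inter_comm, inter_empty_iff]
  rw [Finset.sum_congr rfl step2, sum_interval]
  by_cases h : A = B
  · subst h
    rw [if_pos rfl, one_apply_eq, ← pow_add]
    have hc : A.card ≤ n := by simpa using Finset.card_le_univ A
    have : n - A.card + A.card = n := by omega
    rw [this, Even.neg_one_pow he]
  · rw [if_neg h, mul_zero, one_apply_ne h]

lemma hP3 (he : Even n) : boolP n ^ 3 = 1 := by
  rw [pow_succ, pow_two, hPP, hP2P he]

lemma htraceP : Matrix.trace (boolP n) = 1 := by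
  rw [Matrix.trace]
  have step : ∀ A ∈ Finset.univ, Matrix.diag (boolP n) A
      = if A = (Finset.univ : Finset (Fin n)) then (-1 : ℤ) ^ (n - A.card) else 0 := by
    intro A _
    simp only [Matrix.diag, boolP, Matrix.of_apply]
    have : Aᶜ ⊆ A ↔ A = Finset.univ := by
      constructor
      · intro h
        rw [Finset.eq_univ_iff_forall]
        intro x
        by_contra hx
        exact hx (h (Finset.mem_compl.mpr hx))
      · rintro rfl; simp
    by_cases h : A = Finset.univ
    · rw [if_pos (this.mpr h), if_pos h, mul_one]
    · rw [if_neg (fun hh => h (this.mp hh)), if_neg h, mul_zero]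
  rw [Finset.sum_congr rfl step, Finset.sum_ite_eq' Finset.univ]
  simp

lemma hdetZ : (boolZeta n).det = 1 := by
  have hBT : (boolZeta n).BlockTriangular Finset.card := by
    intro A B h
    simp only [boolZeta, Matrix.of_apply]
    rw [if_neg]
    intro hAB
    exact absurd (Finset.card_le_card hAB) (not_le.mpr h)
  rw [hBT.det]
  apply Finset.prod_eq_one
  intro k _
  have : (boolZeta n).toSquareBlock Finset.card k = 1 := by
    ext ⟨A, hA⟩ ⟨B, hB⟩
    simp only [Matrix.toSquareBlock_def, boolZeta, Matrix.of_apply]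
    by_cases h : A = B
    · subst h
      simp [Matrix.one_apply]
    · have hns : ¬ A ⊆ B := fun hAB =>
        h (Finset.eq_of_subset_of_card_le hAB (le_of_eq (hB.trans hA.symm)))
      simp [Matrix.one_apply, hns, Subtype.ext_iff, h]
  rw [this, det_one]

noncomputable def om : ℂ := ⟨-1/2, Real.sqrt 3 / 2⟩

lemma sqrt3_sq : Real.sqrt 3 * Real.sqrt 3 = 3 := Real.mul_self_sqrt (by norm_num)

lemma om_im : om.im ≠ 0 := by
  simp only [om]
  positivity

lemma hom : om ^ 2 + om + 1 = 0 := by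
  apply Complex.ext <;>
    simp [om, pow_two, Complex.mul_re, Complex.mul_im, Complex.add_re, Complex.add_im] <;>
    nlinarith [sqrt3_sq]

lemma hom3 : om ^ 3 = 1 := by
  linear_combination (om - 1) * hom

lemma conj_om : (starRingEnd ℂ) om = om ^ 2 := by
  have h2 : om ^ 2 = -1 - om := by linear_combination hom
  rw [h2]
  apply Complex.ext <;> simp [om] <;> norm_num

lemma om_ne_one : om ≠ 1 := by
  intro h
  have := om_im
  rw [h] at this
  simp at this

lemma om_sq_ne_one : om ^ 2 ≠ 1 := by
  intro h
  have h2 : om ^ 2 = -1 - om := by linear_combination hom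
  rw [h2] at h
  have heq : om = -2 := by linear_combination -h
  have h3 := om_im
  rw [heq] at h3
  norm_num [Complex.ext_iff] at h3

lemma om_sq_ne_om : om ^ 2 ≠ om := by
  intro h
  have h2 : om ^ 2 = -1 - om := by linear_combination hom
  rw [h2] at h
  have : om = -(1/2 : ℂ) := by linear_combination -h/2
  have h3 := om_im
  rw [this] at h3
  simp at h3

lemma eval_charpoly' {m : Type*} [Fintype m] [DecidableEq m] (M : Matrix m m ℂ) (x : ℂ) :
    M.charpoly.eval x = (x • (1 : Matrix m m ℂ) - M).det := by
  have h1 : M.charpoly.eval x = (Polynomial.evalRingHom x) (Matrix.charmatrix M).det := rfl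
  rw [h1, RingHom.map_det]
  congr 1
  ext i j
  by_cases h : i = j
  · subst h
    simp [Matrix.charmatrix_apply_eq, Matrix.one_apply]
  · simp [Matrix.charmatrix_apply_ne _ _ _ h, Matrix.one_apply_ne h]

open Polynomial in
lemma det_one_add_boolP (n : ℕ) (hn : 0 < n) (he : Even n) :
    (1 + boolP n).det = 2 ^ ((2 ^ n + 2) / 3) := by
  classical
  set σ : ℤ →+* ℂ := Int.castRingHom ℂ with hσ
  set M : Matrix (Finset (Fin n)) (Finset (Fin n)) ℂ := σ.mapMatrix (boolP n) with hMdef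
  have hcard : Fintype.card (Finset (Fin n)) = 2 ^ n := by
    simp [Fintype.card_finset]
  have hM3 : M ^ 3 = 1 := by
    rw [hMdef, ← map_pow, hP3 he, _root_.map_one]
  set p := M.charpoly with hp
  have hmonic := M.charpoly_monic
  have hdeg : p.natDegree = 2 ^ n := by
    rw [hp, Matrix.charpoly_natDegree_eq_dim, hcard]
  have hsplits : p.Splits := IsAlgClosed.splits p
  have hrc : p.roots.card = 2 ^ n := by
    rw [← hdeg]
    exact Polynomial.splits_iff_card_roots.mp hsplits
  -- every root is a cube root of unity
  have hcube : ∀ l ∈ p.roots, l ^ 3 = 1 := by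
    intro l hl
    have h0 : p.eval l = 0 := Polynomial.isRoot_of_mem_roots hl
    have hdet0 : (l • (1 : Matrix (Finset (Fin n)) (Finset (Fin n)) ℂ) - M).det = 0 := by
      rw [← eval_charpoly']; exact h0
    obtain ⟨v, hv0, hv⟩ := Matrix.exists_mulVec_eq_zero_iff.mpr hdet0
    have hMv : M.mulVec v = l • v := by
      have h1 : (l • (1 : Matrix (Finset (Fin n)) (Finset (Fin n)) ℂ) - M).mulVec v
          = l • v - M.mulVec v := by
        rw [Matrix.sub_mulVec, Matrix.smul_mulVec, Matrix.one_mulVec]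
      rw [h1] at hv
      exact (sub_eq_zero.mp hv).symm
    have h2 : (M ^ 3).mulVec v = l ^ 3 • v := by
      have e3 : M ^ 3 = M * (M * M) := by
        rw [pow_succ, pow_two, mul_assoc]
      have hstep : ∀ (w : Finset (Fin n) → ℂ) (x : ℂ), M *ᵥ (x • w) = x • (M *ᵥ w) :=
        fun w x => Matrix.mulVec_smul M x w
      calc (M ^ 3) *ᵥ v = M *ᵥ (M *ᵥ (M *ᵥ v)) := by
            rw [e3, ← Matrix.mulVec_mulVec, ← Matrix.mulVec_mulVec]
        _ = l • (l • (l • v)) := by rw [hMv, hstep, hMv, hstep, hstep, hMv]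
        _ = l ^ 3 • v := by rw [smul_smul, smul_smul]; congr 1; ring
    rw [hM3, Matrix.one_mulVec] at h2
    obtain ⟨i, hi⟩ := Function.ne_iff.mp hv0
    have h4 : v i = l ^ 3 * v i := by
      have := congrFun h2 i
      simpa using this
    have h5 : (l ^ 3 - 1) * v i = 0 := by linear_combination -h4
    rcases mul_eq_zero.mp h5 with h | h
    · exact sub_eq_zero.mp h
    · exact absurd h hi
  have hmem : ∀ l ∈ p.roots, l = 1 ∨ l = om ∨ l = om ^ 2 := by
    intro l hl
    have h3 := hcube l hl
    have hz : (l - 1) * ((l - om) * (l - om ^ 2)) = 0 := by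
      linear_combination h3 + (l - l ^ 2) * hom + (l - 1) * hom3
    rcases mul_eq_zero.mp hz with h | h
    · exact Or.inl (sub_eq_zero.mp h)
    · rcases mul_eq_zero.mp h with h' | h'
      · exact Or.inr (Or.inl (sub_eq_zero.mp h'))
      · exact Or.inr (Or.inr (sub_eq_zero.mp h'))
  set a := p.roots.count 1 with ha
  set b := p.roots.count om with hb
  set c := p.roots.count (om ^ 2) with hc
  have hdecomp : p.roots = Multiset.replicate a 1 + Multiset.replicate b om
      + Multiset.replicate c (om ^ 2) := by
    rw [Multiset.ext]
    intro x
    simp only [Multiset.count_add, Multiset.count_replicate]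
    by_cases h1 : x = 1
    · subst h1
      rw [if_pos rfl, if_neg om_ne_one, if_neg om_sq_ne_one]
      simp [ha]
    · by_cases h2 : x = om
      · subst h2
        rw [if_neg (Ne.symm om_ne_one), if_pos rfl, if_neg om_sq_ne_om]
        simp [hb]
      · by_cases h3 : x = om ^ 2
        · subst h3
          rw [if_neg (Ne.symm om_sq_ne_one), if_neg (Ne.symm om_sq_ne_om), if_pos rfl]
          simp [hc]
        · have hz : Multiset.count x p.roots = 0 := Multiset.count_eq_zero.mpr fun hx => by
            rcases hmem x hx with h | h | h
            · exact h1 h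
            · exact h2 h
            · exact h3 h
          rw [if_neg (fun h => h1 h.symm), if_neg (fun h => h2 h.symm),
            if_neg (fun h => h3 h.symm), hz]
  -- conjugation symmetry : c = b
  have hq : p = ((boolP n).charpoly).map σ := by
    rw [hp, hMdef, RingHom.mapMatrix_apply, Matrix.charpoly_map]
  have hconj : p.map (starRingEnd ℂ) = p := by
    conv_rhs => rw [hq]
    rw [hq, Polynomial.map_map]
    congr 1
    exact Subsingleton.elim _ _
  have hrootsconj : p.roots.map (starRingEnd ℂ) = p.roots := by
    conv_rhs => rw [← hconj]
    rw [hsplits.roots_map (starRingEnd ℂ)]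
  have hcb : c = b := by
    have h6 := Multiset.count_map_eq_count' (starRingEnd ℂ) p.roots
      (RingHom.injective _) om
    rw [hrootsconj, conj_om] at h6
    exact h6
  -- cardinality equation
  have hsumcard : a + b + c = 2 ^ n := by
    have h7 := congrArg Multiset.card hdecomp
    simpa [hrc, Multiset.card_replicate] using h7.symm
  -- trace equation
  have htrM : M.trace = 1 := by
    have h8 : M.trace = σ ((boolP n).trace) := by
      simp [hMdef, Matrix.trace, Matrix.diag, RingHom.mapMatrix_apply, Matrix.map_apply]
    rw [h8, htraceP, _root_.map_one]
  have hsumroots : p.roots.sum = 1 := by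
    have h1 := hsplits.nextCoeff_eq_neg_sum_roots_of_monic hmonic
    have h2 : p.nextCoeff = p.coeff (p.natDegree - 1) :=
      Polynomial.nextCoeff_of_natDegree_pos (by rw [hdeg]; positivity)
    have h3 := Matrix.trace_eq_neg_charpoly_coeff M
    rw [htrM, hcard, ← hdeg, ← h2, h1] at h3
    linear_combination -h3
  have hsum2 : (a : ℂ) + (b : ℂ) * om + (c : ℂ) * om ^ 2 = 1 := by
    rw [← hsumroots, hdecomp]
    simp only [Multiset.sum_add, Multiset.sum_replicate, nsmul_eq_mul]
    ring
  have hab : (a : ℂ) = (b : ℂ) + 1 := by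
    rw [hcb] at hsum2
    linear_combination hsum2 - (b : ℂ) * hom
  have hab' : a = b + 1 := by exact_mod_cast hab
  have h2n : (2 : ℕ) ∣ 2 ^ n := dvd_pow_self 2 hn.ne'
  have h3a : 3 * a = 2 ^ n + 2 := by omega
  have haeven : Even a := by
    rcases h2n with ⟨k, hk⟩
    rw [Nat.even_iff]
    omega
  have hNeven : Even (2 ^ n) := (even_iff_two_dvd).mpr h2n
  -- determinant computation
  have hdetC : (1 + M).det = p.eval (-1) := by
    rw [eval_charpoly']
    have h9 : (-1 : ℂ) • (1 : Matrix (Finset (Fin n)) (Finset (Fin n)) ℂ) - M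
        = -(1 + M) := by
      rw [neg_smul, one_smul]
      abel
    rw [h9, Matrix.det_neg, hcard, Even.neg_one_pow hNeven, one_mul]
  have hkey : ((-1 : ℂ) - om) * ((-1 : ℂ) - om ^ 2) = 1 := by
    linear_combination hom + hom3
  have hev : p.eval (-1) = 2 ^ a := by
    have hprod : p = (p.roots.map fun z => Polynomial.X - Polynomial.C z).prod :=
      hsplits.eq_prod_roots_of_monic hmonic
    rw [hprod, Polynomial.eval_multiset_prod, Multiset.map_map, hdecomp]
    simp only [Multiset.map_add, Multiset.map_replicate, Function.comp_apply,
      Polynomial.eval_sub, Polynomial.eval_X, Polynomial.eval_C,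
      Multiset.prod_add, Multiset.prod_replicate, hcb]
    rw [mul_assoc, ← mul_pow, hkey, one_pow, mul_one,
      show ((-1 : ℂ) - 1) = -2 by norm_num, neg_pow, Even.neg_one_pow haeven, one_mul]
  -- transfer back to ℤ
  have hmap : σ.mapMatrix (1 + boolP n) = 1 + M := by
    rw [map_add, _root_.map_one]
  have hfinal : (((1 + boolP n).det : ℤ) : ℂ) = (((2 ^ a : ℤ)) : ℂ) := by
    have h11 := RingHom.map_det σ (1 + boolP n)
    rw [hmap, hdetC, hev] at h11
    calc (((1 + boolP n).det : ℤ) : ℂ) = σ ((1 + boolP n).det) := rfl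
      _ = 2 ^ a := h11
      _ = (((2 ^ a : ℤ)) : ℂ) := by push_cast; ring
  have h12 : (1 + boolP n).det = 2 ^ a := by exact_mod_cast hfinal
  rw [h12]
  congr 1
  omega

/-- For even `n ≥ 1`, the zeta matrix of the boolean algebra of rank `n` satisfies
`det (Z_n + Z_nᵀ) = 2^{(2ⁿ + 2)/3}`. -/
theorem det_boolZeta_add_transpose_of_even (n : ℕ) (hn : 0 < n) (he : Even n) :
    (boolZeta n + (boolZeta n)ᵀ).det = 2 ^ ((2 ^ n + 2) / 3) := by
  have hsplit : boolZeta n + (boolZeta n)ᵀ = boolZeta n * (1 + boolP n) := by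
    rw [mul_add, mul_one, hZP]
  rw [hsplit, det_mul, hdetZ, one_mul, det_one_add_boolP n hn he]
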